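/- For every natural number i > 0, f(1 / (3^i + 1)) = 2^i / (3^i + 2^i). -/

import Mathlib

open intervalIntegral Set

theorem bourbaki_stmt (f : ℝ → ℝ)
    (hcont : ContinuousOn f (Set.Icc 0 1))
    (h0 : f 0 = 0) (h1 : f 1 = 1)
    (hw1 : ∀ x ∈ Set.Icc (0:ℝ) 1, f (x / 3) = (2/3) * f x)
    (hw2 : ∀ x ∈ Set.Icc (0:ℝ) 1, f ((2 - x) / 3) = (1/3) * (1 + f x))
    (hw3 : ∀ x ∈ Set.Icc (0:ℝ) 1, f ((2 + x) / 3) = 1/3 + (2/3) * f x) :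
    ∀ i : ℕ, 0 < i → f (1 / (3 ^ i + 1)) = 2 ^ i / (3 ^ i + 2 ^ i) := by
  have lemA : ∀ k : ℕ, ∀ x ∈ Set.Icc (0:ℝ) 1,
      f (x / 3 ^ k) = (2/3) ^ k * f x := by
    intro k
    induction k with
    | zero => intro x hx; simp
    | succ k ih =>
      intro x hx
      have hx3 : x / 3 ∈ Set.Icc (0:ℝ) 1 := ⟨by nlinarith [hx.1], by nlinarith [hx.2]⟩
      have hsplit : x / 3 ^ (k+1) = (x / 3) / 3 ^ k := by ring
      rw [hsplit, ih _ hx3, hw1 x hx]; ring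
  have lemB : ∀ k : ℕ, ∀ x ∈ Set.Icc (0:ℝ) 1,
      f (1 + (x - 1) / 3 ^ k) = 1 + (2/3) ^ k * (f x - 1) := by
    intro k
    induction k with
    | zero => intro x hx; simp
    | succ k ih =>
      intro x hx
      have hy : (2 + x) / 3 ∈ Set.Icc (0:ℝ) 1 := ⟨by nlinarith [hx.1], by nlinarith [hx.2]⟩
      have hsplit : 1 + (x - 1) / 3 ^ (k+1) = 1 + ((2 + x)/3 - 1) / 3 ^ k := by ring
      rw [hsplit, ih _ hy, hw3 x hx]; ring
  intro i hi
  set a : ℝ := 1 / (3 ^ i + 1) with ha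
  have h3pos : (0:ℝ) < 3 ^ i := by positivity
  have h3pos1 : (0:ℝ) < 3 ^ i + 1 := by positivity
  have haI : a ∈ Set.Icc (0:ℝ) 1 := by
    constructor
    · positivity
    · rw [ha, div_le_one h3pos1]; linarith
  have h1a : 1 - a = 3 ^ i * a := by
    rw [ha]; field_simp; ring
  have haI' : 1 - a ∈ Set.Icc (0:ℝ) 1 := ⟨by linarith [haI.2], by linarith [haI.1]⟩
  have p1 : (1 - a) / 3 ^ i = a := by
    rw [h1a]; field_simp
  have p2 : 1 + (a - 1) / 3 ^ i = 1 - a := by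
    have : a - 1 = -(3 ^ i * a) := by linarith
    rw [this]; field_simp; linarith
  have e1 : f ((1 - a) / 3 ^ i) = (2/3) ^ i * f (1 - a) := lemA i (1 - a) haI'
  have e2 : f (1 + (a - 1) / 3 ^ i) = 1 + (2/3) ^ i * (f a - 1) := lemB i a haI
  rw [p1] at e1
  rw [p2] at e2
  set r : ℝ := (2/3) ^ i with hrdef
  have heq : f a = r * (1 + r * (f a - 1)) := by rw [e2] at e1; exact e1
  have hr : r < 1 := by
    rw [hrdef]
    exact pow_lt_one₀ (by norm_num) (by norm_num) hi.ne'
  have hfac : (1 - r) * (f a * (1 + r) - r) = 0 := by linear_combination heq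
  have hkey : f a * (1 + r) = r := by
    rcases mul_eq_zero.mp hfac with h | h
    · linarith
    · linarith
  have hrval : r = 2 ^ i / 3 ^ i := by rw [hrdef, div_pow]
  rw [hrval] at hkey
  have h2pos : (0:ℝ) < 2 ^ i := by positivity
  have hkey2 : f a * (3 ^ i + 2 ^ i) = 2 ^ i := by
    have h3ne : (3:ℝ) ^ i ≠ 0 := ne_of_gt h3pos
    field_simp at hkey
    nlinarith [hkey]
  rw [eq_div_iff (by positivity : (3:ℝ) ^ i + 2 ^ i ≠ 0)]
  linarith
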